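/- Let a, t be integers with 2 ≤ a ≤ t and (a,t) = 1, and let j be an integer with t ∤ j. Then | Σ_{0≤|r|≤a/2} cos(2πr·t̄/a)·cos(2πjr/t) | · | 2·Σ_{J≤t/(2a)} ( cos(2πJ/t) − 1 )·cos(2πjaJ/t) | ≪ (1/a)·(1/‖ja/t‖), with an absolute implied constant. -/

import Mathlib

open Finset

noncomputable section

/-- `invMod x n` is the multiplicative inverse of `x` modulo `n` (as a natural number). -/
def invMod (x n : ℕ) : ℕ := ((x : ZMod n))⁻¹.val

/-- A complete set of residues modulo `a`, represented by integers `r` with `|r| ≤ a/2`. -/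
def Ires (a : ℕ) : Finset ℤ := Finset.Icc (-(((a - 1) / 2 : ℕ) : ℤ)) (((a / 2 : ℕ) : ℤ))

/-- The distance from a real number to the nearest integer, `‖α‖ = min_{n ∈ ℤ} |α - n|`. -/
def dist2int (x : ℝ) : ℝ := |x - round x|

lemma two_dist_le_abs_sin (θ : ℝ) : 2 * dist2int θ ≤ |Real.sin (Real.pi * θ)| := by
  have hπ := Real.pi_pos
  set r : ℤ := round θ with hr
  set δ : ℝ := θ - r with hδ
  have hδle : |δ| ≤ 1 / 2 := abs_sub_round θ
  have hsin : |Real.sin (Real.pi * θ)| = |Real.sin (Real.pi * δ)| := by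
    have h : Real.pi * θ = Real.pi * δ + r * Real.pi := by rw [hδ]; ring
    rw [h, Real.sin_add, Real.sin_int_mul_pi, mul_zero, add_zero, abs_mul,
      Real.abs_cos_int_mul_pi, mul_one]
  rw [hsin]
  have h1 : |Real.sin (Real.pi * δ)| = Real.sin (Real.pi * |δ|) := by
    rcases le_or_gt 0 δ with h | h
    · rw [abs_of_nonneg h, abs_of_nonneg]
      exact Real.sin_nonneg_of_nonneg_of_le_pi (by positivity)
        (by nlinarith [abs_of_nonneg h ▸ hδle])
    · have hd : |δ| = -δ := abs_of_neg h
      have hs : Real.sin (Real.pi * -δ) = -Real.sin (Real.pi * δ) := by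
        rw [mul_neg, Real.sin_neg]
      have hnn : 0 ≤ Real.sin (Real.pi * -δ) :=
        Real.sin_nonneg_of_nonneg_of_le_pi (by nlinarith) (by nlinarith [hd ▸ hδle])
      rw [hd, abs_of_nonpos (by linarith), ← hs]
  rw [h1]
  have h2 : 2 / Real.pi * (Real.pi * |δ|) ≤ Real.sin (Real.pi * |δ|) :=
    Real.mul_le_sin (by positivity) (by nlinarith [abs_nonneg δ])
  have h3 : 2 / Real.pi * (Real.pi * |δ|) = 2 * |δ| := by field_simp
  rw [h3] at h2
  have h4 : dist2int θ = |δ| := rfl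
  linarith

lemma cos_geom_bound (θ : ℝ) (hθ : 0 < dist2int θ) (n : ℕ) :
    |∑ i ∈ Finset.range n, Real.cos (2 * Real.pi * θ * i)| ≤ 1 / (2 * dist2int θ) := by
  have hπ := Real.pi_pos
  set z : ℂ := Complex.exp ((2 * Real.pi * θ : ℝ) * Complex.I) with hz
  have hzpow : ∀ i : ℕ, z ^ i = Complex.exp ((2 * Real.pi * θ * i : ℝ) * Complex.I) := by
    intro i
    rw [hz, ← Complex.exp_nat_mul]
    congr 1
    push_cast
    ring
  have hre : ∀ i : ℕ, (z ^ i).re = Real.cos (2 * Real.pi * θ * i) := by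
    intro i; rw [hzpow i, Complex.exp_ofReal_mul_I_re]
  -- lower bound on |z - 1|
  have habs : 4 * dist2int θ ≤ ‖z - 1‖ := by
    have hz1 : z - 1 = ((Real.cos (2 * Real.pi * θ) - 1 : ℝ) : ℂ) +
        ((Real.sin (2 * Real.pi * θ) : ℝ) : ℂ) * Complex.I := by
      rw [hz, Complex.exp_mul_I]
      push_cast [Complex.ofReal_cos, Complex.ofReal_sin]
      ring
    have hsq : ‖z - 1‖ ^ 2 = (2 * |Real.sin (Real.pi * θ)|) ^ 2 := by
      rw [Complex.sq_norm, hz1, Complex.normSq_add_mul_I]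
      have hdouble : Real.cos (2 * Real.pi * θ) = 1 - 2 * Real.sin (Real.pi * θ) ^ 2 := by
        have h : 2 * Real.pi * θ = 2 * (Real.pi * θ) := by ring
        rw [h, Real.cos_two_mul]
        nlinarith [Real.sin_sq_add_cos_sq (Real.pi * θ)]
      have hs2 : Real.sin (2 * Real.pi * θ) =
          2 * Real.sin (Real.pi * θ) * Real.cos (Real.pi * θ) := by
        have h : 2 * Real.pi * θ = 2 * (Real.pi * θ) := by ring
        rw [h, Real.sin_two_mul]
      rw [hdouble, hs2]
      have hpy := Real.sin_sq_add_cos_sq (Real.pi * θ)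
      have habs2 := sq_abs (Real.sin (Real.pi * θ))
      nlinarith [sq_nonneg (Real.sin (Real.pi * θ))]
    have h2 := two_dist_le_abs_sin θ
    nlinarith [norm_nonneg (z - 1), hθ, abs_nonneg (Real.sin (Real.pi * θ))]
  have hzne : z ≠ 1 := by
    intro h
    rw [h, sub_self, norm_zero] at habs
    nlinarith
  have hsum : ∑ i ∈ Finset.range n, z ^ i = (z ^ n - 1) / (z - 1) := geom_sum_eq hzne n
  have hnorm : ‖∑ i ∈ Finset.range n, z ^ i‖ ≤ 1 / (2 * dist2int θ) := by
    rw [hsum, norm_div]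
    have h1 : ‖z ^ n - 1‖ ≤ 2 := by
      calc ‖z ^ n - 1‖ ≤ ‖z ^ n‖ + ‖(1:ℂ)‖ :=
            norm_sub_le _ _
        _ ≤ 2 := by
            rw [hzpow n, Complex.norm_exp_ofReal_mul_I, norm_one]; norm_num
    have h2 : 0 < ‖z - 1‖ := by linarith
    calc ‖z ^ n - 1‖ / ‖z - 1‖
        ≤ 2 / (4 * dist2int θ) := by
          apply div_le_div₀ (by norm_num) h1 (by linarith) habs
      _ = 1 / (2 * dist2int θ) := by field_simp; ring
  calc |∑ i ∈ Finset.range n, Real.cos (2 * Real.pi * θ * i)|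
      = |(∑ i ∈ Finset.range n, z ^ i).re| := by
        rw [Complex.re_sum]
        congr 1
        exact (Finset.sum_congr rfl fun i _ => (hre i).symm)
    _ ≤ ‖∑ i ∈ Finset.range n, z ^ i‖ := Complex.abs_re_le_norm _
    _ ≤ 1 / (2 * dist2int θ) := hnorm

lemma tele_sum (f : ℕ → ℝ) : ∀ N : ℕ, ∑ i ∈ Finset.Ioc 0 N, (f i - f (i+1)) = f 1 - f (N+1)
  | 0 => by simp
  | (N+1) => by
      rw [Finset.sum_Ioc_succ_top (Nat.zero_le _), tele_sum f N]; ring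

lemma abs_sub_le' (x y : ℝ) : |x - y| ≤ |x| + |y| := by
  calc |x - y| = |x + (-y)| := by ring_nf
    _ ≤ |x| + |-y| := abs_add_le _ _
    _ = |x| + |y| := by rw [abs_neg]

set_option maxHeartbeats 1000000 in
theorem statement15 :
    ∃ C : ℝ, 0 < C ∧ ∀ a t : ℕ, ∀ j : ℤ, 2 ≤ a → a ≤ t → Nat.Coprime a t →
      ¬ ((t : ℤ) ∣ j) →
      |∑ r ∈ Ires a,
          Real.cos (2 * Real.pi * (r : ℝ) * (invMod t a : ℝ) / (a : ℝ)) *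
            Real.cos (2 * Real.pi * (j : ℝ) * (r : ℝ) / (t : ℝ))| *
        |2 * ∑ J ∈ Finset.Icc 1 (t / (2 * a)),
            (Real.cos (2 * Real.pi * (J : ℝ) / (t : ℝ)) - 1) *
              Real.cos (2 * Real.pi * (j : ℝ) * (a : ℝ) * (J : ℝ) / (t : ℝ))|
      ≤ C * (1 / (a : ℝ)) * (1 / dist2int ((j : ℝ) * (a : ℝ) / (t : ℝ))) := by
  refine ⟨15, by norm_num, ?_⟩
  intro a t j ha hat hco hdvd
  have hπ := Real.pi_pos
  have han : 0 < a := by omega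
  have htn : 0 < t := by omega
  have hA : (0:ℝ) < (a:ℝ) := by exact_mod_cast han
  have hA2 : (2:ℝ) ≤ (a:ℝ) := by exact_mod_cast ha
  have hT : (0:ℝ) < (t:ℝ) := by exact_mod_cast htn
  set θ : ℝ := (j:ℝ) * (a:ℝ) / (t:ℝ) with hθdef
  -- positivity of the distance to the nearest integer
  have hd : 0 < dist2int θ := by
    rcases (abs_nonneg (θ - round θ)).lt_or_eq with h | h
    · exact h
    · exfalso
      have hzero : θ - (round θ : ℝ) = 0 := abs_eq_zero.mp h.symm
      have heq : (j:ℝ) * (a:ℝ) = (round θ : ℝ) * (t:ℝ) := by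
        have hh : θ = (round θ : ℝ) := by linarith
        rw [hθdef] at hh
        field_simp at hh
        linarith [hh]
      have hint : j * (a:ℤ) = round θ * (t:ℤ) := by exact_mod_cast heq
      have hdvd2 : (t:ℤ) ∣ j * (a:ℤ) := ⟨round θ, by linarith [hint]⟩
      have hcop : IsCoprime (t:ℤ) (a:ℤ) := Nat.isCoprime_iff_coprime.mpr hco.symm
      exact hdvd (hcop.dvd_of_dvd_mul_right hdvd2)
  have hd0 : 0 ≤ dist2int θ := le_of_lt hd
  -- first factor bound
  have hcard : ((Ires a).card : ℝ) = (a : ℝ) := by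
    have h1 : (Ires a).card = a := by
      rw [Ires, Int.card_Icc]
      omega
    exact_mod_cast h1
  have hS1 : |∑ r ∈ Ires a,
      Real.cos (2 * Real.pi * (r : ℝ) * (invMod t a : ℝ) / (a : ℝ)) *
        Real.cos (2 * Real.pi * (j : ℝ) * (r : ℝ) / (t : ℝ))| ≤ (a:ℝ) := by
    refine le_trans (Finset.abs_sum_le_sum_abs _ _) ?_
    have hb : ∀ r ∈ Ires a,
        |Real.cos (2 * Real.pi * (r : ℝ) * (invMod t a : ℝ) / (a : ℝ)) *
          Real.cos (2 * Real.pi * (j : ℝ) * (r : ℝ) / (t : ℝ))| ≤ 1 := by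
      intro r _
      rw [abs_mul]
      exact mul_le_one₀ (Real.abs_cos_le_one _) (abs_nonneg _) (Real.abs_cos_le_one _)
    calc ∑ r ∈ Ires a,
        |Real.cos (2 * Real.pi * (r : ℝ) * (invMod t a : ℝ) / (a : ℝ)) *
          Real.cos (2 * Real.pi * (j : ℝ) * (r : ℝ) / (t : ℝ))|
        ≤ ∑ _r ∈ Ires a, (1:ℝ) := Finset.sum_le_sum hb
      _ = ((Ires a).card : ℝ) := by rw [Finset.sum_const, nsmul_eq_mul, mul_one]
      _ = (a:ℝ) := hcard
  -- second factor setup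
  set M : ℕ := t / (2 * a) with hMdef
  set B : ℝ := 1 / (2 * dist2int θ) with hBdef
  have hB0 : 0 ≤ B := by positivity
  set f : ℕ → ℝ := fun i => Real.cos (2 * Real.pi * (i:ℝ) / (t:ℝ)) - 1 with hfdef
  set g : ℕ → ℝ := fun i => Real.cos (2 * Real.pi * θ * (i:ℝ)) with hgdef
  have hG : ∀ n : ℕ, |∑ i ∈ Finset.range n, g i| ≤ B := fun n => cos_geom_bound θ hd n
  have hMa : M * (2 * a) ≤ t := Nat.div_mul_le_self t (2*a)
  have hsum_eq : ∑ J ∈ Finset.Icc 1 M,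
      (Real.cos (2 * Real.pi * (J : ℝ) / (t : ℝ)) - 1) *
        Real.cos (2 * Real.pi * (j : ℝ) * (a : ℝ) * (J : ℝ) / (t : ℝ))
      = ∑ i ∈ Finset.Ioc 0 M, f i • g i := by
    have hset : Finset.Icc 1 M = Finset.Ioc 0 M := by
      ext x; simp only [Finset.mem_Icc, Finset.mem_Ioc]; omega
    rw [hset]
    apply Finset.sum_congr rfl
    intro i _
    rw [smul_eq_mul, hfdef, hgdef]
    congr 2
    rw [hθdef]; ring
  set c : ℝ := (Real.pi / (a:ℝ))^2 / 2 with hcdef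
  have hc0 : 0 ≤ c := by positivity
  by_cases hM0 : M = 0
  · rw [hsum_eq, hM0]
    simp only [Finset.Ioc_self, Finset.sum_empty, mul_zero, abs_zero]
    positivity
  have hM1 : 0 < M := Nat.pos_of_ne_zero hM0
  -- bounds on f
  have hfbd : ∀ i : ℕ, 1 ≤ i → i ≤ M → -c ≤ f i ∧ f i ≤ 0 := by
    intro i h1 h2
    have h2iA : 2 * (i:ℝ) * (a:ℝ) ≤ (t:ℝ) := by
      have hnat : 2 * i * a ≤ t := by
        calc 2 * i * a ≤ 2 * M * a := by
              have := Nat.mul_le_mul_right a (Nat.mul_le_mul_left 2 h2)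
              simpa [Nat.mul_assoc] using this
          _ = M * (2 * a) := by ring
          _ ≤ t := hMa
      exact_mod_cast hnat
    have hx0 : (0:ℝ) ≤ 2 * Real.pi * (i:ℝ) / (t:ℝ) := by positivity
    have hxle : 2 * Real.pi * (i:ℝ) / (t:ℝ) ≤ Real.pi / (a:ℝ) := by
      rw [div_le_div_iff₀ hT hA]
      nlinarith
    constructor
    · have hcos := Real.one_sub_sq_div_two_le_cos (x := 2 * Real.pi * (i:ℝ) / (t:ℝ))
      simp only [hfdef, hcdef]
      nlinarith
    · simp only [hfdef]
      have := Real.cos_le_one (2 * Real.pi * (i:ℝ) / (t:ℝ))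
      linarith
  have hmono : ∀ i : ℕ, 1 ≤ i → i + 1 ≤ M → f (i + 1) ≤ f i := by
    intro i h1 h2
    have h2t : 2 * ((i:ℝ) + 1) * (a:ℝ) ≤ (t:ℝ) := by
      have hnat : 2 * (i+1) * a ≤ t := by
        calc 2 * (i+1) * a ≤ 2 * M * a := by
              have := Nat.mul_le_mul_right a (Nat.mul_le_mul_left 2 h2)
              simpa [Nat.mul_assoc] using this
          _ = M * (2 * a) := by ring
          _ ≤ t := hMa
      exact_mod_cast hnat
    have hi0 : (0:ℝ) ≤ (i:ℝ) := Nat.cast_nonneg i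
    have h2i : 2 * ((i:ℝ) + 1) ≤ (t:ℝ) := by nlinarith
    simp only [hfdef]
    push_cast
    have hle : Real.cos (2 * Real.pi * ((i:ℝ)+1) / (t:ℝ)) ≤
        Real.cos (2 * Real.pi * (i:ℝ) / (t:ℝ)) := by
      apply Real.cos_le_cos_of_nonneg_of_le_pi (by positivity)
      · rw [div_le_iff₀ hT]
        nlinarith [mul_le_mul_of_nonneg_left h2i (le_of_lt hπ)]
      · rw [div_le_div_iff₀ hT hT]
        nlinarith
    linarith
  -- Abel summation
  have habel := Finset.sum_Ioc_by_parts f g hM1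
  -- telescoping bound
  have htel : ∑ i ∈ Finset.Ioc 0 (M-1), |f (i+1) - f i| = f 1 - f M := by
    have h1 : ∀ i ∈ Finset.Ioc 0 (M-1), |f (i+1) - f i| = f i - f (i+1) := by
      intro i hi
      simp only [Finset.mem_Ioc] at hi
      rw [abs_of_nonpos (by linarith [hmono i hi.1 (by omega)])]
      ring
    rw [Finset.sum_congr rfl h1, tele_sum f (M-1)]
    congr 2
    omega
  have hf1 := hfbd 1 le_rfl hM1
  have hfM := hfbd M hM1 le_rfl
  have hS2 : |∑ i ∈ Finset.Ioc 0 M, f i • g i| ≤ 3 * c * B := by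
    rw [habel]
    set X : ℝ := f M • ∑ i ∈ Finset.range (M+1), g i with hX
    set Y : ℝ := f (0+1) • ∑ i ∈ Finset.range (0+1), g i with hY
    set Z : ℝ := ∑ i ∈ Finset.Ioc 0 (M-1), (f (i+1) - f i) • ∑ k ∈ Finset.range (i+1), g k
      with hZ
    have e1 : |X| ≤ c * B := by
      rw [hX, smul_eq_mul, abs_mul]
      exact mul_le_mul (by rw [abs_of_nonpos hfM.2]; linarith [hfM.1]) (hG _)
        (abs_nonneg _) hc0
    have e2 : |Y| ≤ c * B := by
      rw [hY, smul_eq_mul, abs_mul]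
      exact mul_le_mul (by rw [abs_of_nonpos hf1.2]; linarith [hf1.1]) (hG _)
        (abs_nonneg _) hc0
    have e3 : |Z| ≤ c * B := by
      rw [hZ]
      refine le_trans (Finset.abs_sum_le_sum_abs _ _) ?_
      calc ∑ i ∈ Finset.Ioc 0 (M-1), |(f (i+1) - f i) • ∑ k ∈ Finset.range (i+1), g k|
          ≤ ∑ i ∈ Finset.Ioc 0 (M-1), |f (i+1) - f i| * B := by
            apply Finset.sum_le_sum
            intro i _
            rw [smul_eq_mul, abs_mul]
            exact mul_le_mul_of_nonneg_left (hG _) (abs_nonneg _)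
        _ = (f 1 - f M) * B := by rw [← Finset.sum_mul, htel]
        _ ≤ c * B := by
            apply mul_le_mul_of_nonneg_right _ hB0
            linarith [hf1.2, hfM.1]
    calc |X - Y - Z| ≤ |X - Y| + |Z| := abs_sub_le' _ _
      _ ≤ |X| + |Y| + |Z| := by linarith [abs_sub_le' X Y]
      _ ≤ 3 * c * B := by linarith
  -- assemble
  rw [hsum_eq]
  have h2S2 : |2 * ∑ i ∈ Finset.Ioc 0 M, f i • g i| ≤ 6 * c * B := by
    rw [abs_mul, abs_two]
    linarith [hS2]
  have hprod : |∑ r ∈ Ires a,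
      Real.cos (2 * Real.pi * (r : ℝ) * (invMod t a : ℝ) / (a : ℝ)) *
        Real.cos (2 * Real.pi * (j : ℝ) * (r : ℝ) / (t : ℝ))| *
      |2 * ∑ i ∈ Finset.Ioc 0 M, f i • g i| ≤ (a:ℝ) * (6 * c * B) :=
    mul_le_mul hS1 h2S2 (abs_nonneg _) (le_of_lt hA)
  refine le_trans hprod ?_
  have heq : (a:ℝ) * (6 * c * B) = 3 * Real.pi^2 / (2 * ((a:ℝ) * dist2int θ)) := by
    rw [hcdef, hBdef]
    field_simp
    ring
  rw [heq]
  have hπ315 : Real.pi < 3.15 := by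
    have := Real.pi_lt_d2
    linarith
  have hπsq : Real.pi^2 < 10 := by nlinarith
  have hAd : 0 < (a:ℝ) * dist2int θ := by positivity
  have hrhs : 15 * (1 / (a:ℝ)) * (1 / dist2int θ) = 15 / ((a:ℝ) * dist2int θ) := by
    field_simp
  rw [hrhs, div_le_div_iff₀ (by positivity) hAd]
  nlinarith [hAd, hπsq]
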